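/- Let μ, L > 0, n ≥ 1, c ≥ 0 (playing the role of ‖I − W‖²), and suppose 0 < α < min{ n(1+c)/(2μ), μn(1+c)/(μ² + L²(1+c)²n²) }. Then with η = (1 − √(1 − 4L²α²))/2, one has η < μα/(n(1+c)). -/
import Mathlib


/-- for `μ, L > 0`, `n ≥ 1`, `c ≥ 0` (standing for `‖I - W‖²`), if
`0 < α < min{ n(1+c)/(2μ), μn(1+c)/(μ² + L²(1+c)²n²) }`, then with
`η = (1 - √(1 - 4L²α²))/2` one has `η < μα/(n(1+c))`. -/
theorem stmt_14 (μ L : ℝ) (hμ : 0 < μ) (hL : 0 < L) (n : ℕ) (hn : 1 ≤ n)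
    (c : ℝ) (hc : 0 ≤ c) (α : ℝ) (hα : 0 < α)
    (hα' : α < min (n * (1 + c) / (2 * μ))
      (μ * n * (1 + c) / (μ ^ 2 + L ^ 2 * (1 + c) ^ 2 * n ^ 2))) :
    (1 - Real.sqrt (1 - 4 * L ^ 2 * α ^ 2)) / 2 < μ * α / (n * (1 + c)) := by
  set k : ℝ := n * (1 + c) with hkdef
  have hn1 : (1 : ℝ) ≤ n := by exact_mod_cast hn
  have hk : 0 < k := by positivity
  obtain ⟨h1, h2⟩ := lt_min_iff.mp hα'
  have h1' : 2 * μ * α < k := by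
    have := (lt_div_iff₀ (by positivity : (0:ℝ) < 2 * μ)).mp h1
    linarith
  have hden : 0 < μ ^ 2 + L ^ 2 * (1 + c) ^ 2 * n ^ 2 := by positivity
  have h2' : α * (μ ^ 2 + L ^ 2 * k ^ 2) < μ * k := by
    have h := (lt_div_iff₀ hden).mp h2
    have hk2 : k ^ 2 = (1 + c) ^ 2 * (n:ℝ) ^ 2 := by rw [hkdef]; ring
    rw [hk2]
    nlinarith [h]
  have hx : 0 ≤ 1 - 2 * (μ * α / k) := by
    have : μ * α / k < 1 / 2 := by
      rw [div_lt_div_iff₀ hk (by norm_num)]; nlinarith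
    linarith
  have hsqrt : 1 - 2 * (μ * α / k) < Real.sqrt (1 - 4 * L ^ 2 * α ^ 2) := by
    rw [Real.lt_sqrt (by linarith)]
    have hdiv : μ * α / k * k = μ * α := by field_simp
    nlinarith [sq_nonneg (μ * α / k), mul_pos hk hk, hdiv, h2',
      mul_lt_mul_of_pos_right h2' (mul_pos hk hk)]
  linarith [hsqrt]
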